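/- arXiv:1304.2549 — 2 statements merged into one kernel-verified Lean document; each statement's English description precedes it below -/
import Mathlib

section
/- Let k be a perfect field of characteristic different from 2, and let λ, ν ∈ k* be such that −λν is not a square in k. Set F = λx² + νy² − 1 ∈ k[x,y]. Then a k-algebra automorphism φ of k[x,y] satisfies φ(F) = cF for some c ∈ k* if and only if φ is linear (φ(x) = αx + βy, φ(y) = γx + δy with αδ − βγ ≠ 0) and preserves the quadratic form, i.e. λ·φ(x)² + ν·φ(y)² = λx² + νy²; equivalently, Aut(A², V(F)) is the subgroup of GL(2,k) preserving the form λx² + νy², namely the set of matrices (a, −νb; λb, a) with a² + λνb² = 1 together with their compositions with σ = diag(1, −1). -/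
open MvPolynomial Finsupp



section Aux
variable {k : Type*} [Field k]

lemma eq_C_of_totalDegree_eq_zero {σ R : Type*} [CommSemiring R] [DecidableEq σ] {p : MvPolynomial σ R}
    (h : p.totalDegree = 0) : p = C (coeff 0 p) := by
  ext m
  by_cases hm : m = 0
  · subst hm; simp
  · rw [coeff_C, if_neg (Ne.symm hm)]
    apply coeff_eq_zero_of_totalDegree_lt
    rw [h]
    obtain ⟨i, hi⟩ := Finsupp.ne_iff.mp hm
    have hi' : m i ≠ 0 := by simpa using hi
    calc 0 < m i := Nat.pos_of_ne_zero hi'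
      _ ≤ ∑ j ∈ m.support, m j :=
        Finset.single_le_sum (fun _ _ => Nat.zero_le _) (Finsupp.mem_support_iff.mpr hi')

lemma leading_ne_zero {σ R : Type*} [CommSemiring R] {p : MvPolynomial σ R} (hp : p ≠ 0) :
    homogeneousComponent p.totalDegree p ≠ 0 := by
  obtain ⟨m, hm, hdeg⟩ := p.support.exists_mem_eq_sup
    (Finset.nonempty_iff_ne_empty.mpr (mt MvPolynomial.support_eq_empty.mp hp)) (fun s => s.sum fun _ e => e)
  intro h0
  have hc := coeff_homogeneousComponent (σ := σ) p.totalDegree p m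
  rw [h0] at hc
  have hdm : m.degree = p.totalDegree := by
    rw [MvPolynomial.totalDegree, hdeg]; rfl
  rw [if_pos hdm, coeff_zero] at hc
  exact (Finsupp.mem_support_iff.mp hm) hc.symm

lemma homogeneousComponent_mul_of_le {σ R : Type*} [CommRing R] {p q : MvPolynomial σ R} {a b : ℕ}
    (hp : p.totalDegree ≤ a) (hq : q.totalDegree ≤ b) :
    homogeneousComponent (a + b) (p * q)
      = homogeneousComponent a p * homogeneousComponent b q := by
  have key : ∀ i j : ℕ,
      homogeneousComponent (a + b) (homogeneousComponent i p * homogeneousComponent j q)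
        = if a + b = i + j then homogeneousComponent i p * homogeneousComponent j q else 0 :=
    fun i j => homogeneousComponent_of_mem
      ((mem_homogeneousSubmodule _ _).mpr
        ((homogeneousComponent_isHomogeneous i p).mul (homogeneousComponent_isHomogeneous j q)))
  conv_lhs => rw [← sum_homogeneousComponent p, ← sum_homogeneousComponent q]
  rw [Finset.sum_mul_sum, map_sum]
  simp_rw [map_sum, key]
  rcases lt_or_eq_of_le hp with hpa | hpa
  · rw [homogeneousComponent_eq_zero _ p hpa, zero_mul]
    apply Finset.sum_eq_zero; intro i hi
    apply Finset.sum_eq_zero; intro j hj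
    rw [if_neg]
    simp only [Finset.mem_range] at hi hj
    omega
  · rcases lt_or_eq_of_le hq with hqb | hqb
    · rw [homogeneousComponent_eq_zero _ q hqb, mul_zero]
      apply Finset.sum_eq_zero; intro i hi
      apply Finset.sum_eq_zero; intro j hj
      rw [if_neg]
      simp only [Finset.mem_range] at hi hj
      omega
    · rw [Finset.sum_eq_single_of_mem a (by simp [Finset.mem_range]; omega)]
      · rw [Finset.sum_eq_single_of_mem b (by simp [Finset.mem_range]; omega)]
        · rw [if_pos rfl]
        · intro j hj hjb
          rw [if_neg]
          simp only [Finset.mem_range] at hj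
          omega
      · intro i hi hia
        apply Finset.sum_eq_zero; intro j hj
        rw [if_neg]
        simp only [Finset.mem_range] at hi hj
        omega

lemma homogeneousComponent_sq {σ R : Type*} [CommRing R] {p : MvPolynomial σ R} {d : ℕ}
    (hp : p.totalDegree ≤ d) :
    homogeneousComponent (2 * d) (p ^ 2) = (homogeneousComponent d p) ^ 2 := by
  rw [pow_two, pow_two, two_mul, homogeneousComponent_mul_of_le hp hp]

end Aux
section Aux2
variable {k : Type*} [Field k]

lemma aniso (lam nu : kˣ) (hsq : ¬ ∃ s : k, s ^ 2 = -((lam : k) * (nu : k)))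
    {p q : MvPolynomial (Fin 2) k}
    (h : C (lam : k) * p ^ 2 + C (nu : k) * q ^ 2 = 0) : p = 0 ∧ q = 0 := by
  set L : k := (lam : k) with hL
  set N : k := (nu : k) with hN
  have hL0 : L ≠ 0 := lam.ne_zero
  have hN0 : N ≠ 0 := nu.ne_zero
  have hC : (C L : MvPolynomial (Fin 2) k) ≠ 0 := by
    simpa using (map_ne_zero_iff (C : k →+* MvPolynomial (Fin 2) k) (C_injective _ _)).mpr hL0
  by_cases hq : q = 0
  · subst hq
    rw [zero_pow two_ne_zero, mul_zero, add_zero] at h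
    have : p ^ 2 = 0 := by
      rcases mul_eq_zero.mp h with h' | h'
      · exact absurd h' hC
      · exact h'
    exact ⟨pow_eq_zero_iff (two_ne_zero) |>.mp this, rfl⟩
  · exfalso
    have h' : C L * p ^ 2 = C (-N) * q ^ 2 := by rw [map_neg]; linear_combination h
    have hLN : L * (-N / L) = -N := by field_simp
    have hp2 : p ^ 2 = C (-N / L) * q ^ 2 := by
      apply mul_left_cancel₀ hC
      rw [← mul_assoc, ← map_mul, hLN, h']
    haveI : IsIntegrallyClosed (MvPolynomial (Fin 2) k) :=
      UniqueFactorizationMonoid.instIsIntegrallyClosed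
    have hdvd : q ∣ p := (IsIntegrallyClosed.pow_dvd_pow_iff two_ne_zero).mp ⟨C (-N / L), by rw [hp2, mul_comm]⟩
    obtain ⟨r, rfl⟩ := hdvd
    have hq2 : q ^ 2 ≠ 0 := pow_ne_zero _ hq
    have hr : C L * r ^ 2 = C (-N) := by
      have h0 : q ^ 2 * (C L * r ^ 2 - C (-N)) = 0 := by linear_combination h'
      rcases mul_eq_zero.mp h0 with h8 | h8
      · exact absurd h8 hq2
      · exact sub_eq_zero.mp h8
    have hr2 : r ^ 2 = C (-N / L) := by
      apply mul_left_cancel₀ hC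
      rw [← map_mul, hLN, hr]
    have hNL0 : (-N / L) ≠ 0 := by
      simp [hN0, hL0]
    have hCNL : (C (-N / L) : MvPolynomial (Fin 2) k) ≠ 0 := by
      simpa using (map_ne_zero_iff (C : k →+* MvPolynomial (Fin 2) k) (C_injective _ _)).mpr hNL0
    have hr0 : r ≠ 0 := by
      intro h0; rw [h0] at hr2; simp at hr2; exact hCNL hr2.symm
    have hdr : r.totalDegree = 0 := by
      by_contra hd
      have h1 : homogeneousComponent (2 * r.totalDegree) (r ^ 2)
          = (homogeneousComponent r.totalDegree r) ^ 2 := homogeneousComponent_sq le_rfl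
      rw [hr2] at h1
      have h2 : homogeneousComponent (2 * r.totalDegree) (C (-N / L) : MvPolynomial (Fin 2) k)
          = 0 := homogeneousComponent_eq_zero _ _ (by rw [totalDegree_C]; omega)
      rw [h2] at h1
      exact leading_ne_zero hr0 ((pow_eq_zero_iff two_ne_zero).mp h1.symm)
    have hrC : r = C (coeff 0 r) := eq_C_of_totalDegree_eq_zero hdr
    set t : k := coeff 0 r with ht
    have ht2 : t ^ 2 = -N / L := by
      have : C (t ^ 2) = (C (-N / L) : MvPolynomial (Fin 2) k) := by
        rw [map_pow, ← hrC, hr2]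
      exact C_injective _ _ this
    exact hsq ⟨L * t, by rw [mul_pow, ht2]; field_simp⟩

lemma deg_le_one (lam nu : kˣ) (hsq : ¬ ∃ s : k, s ^ 2 = -((lam : k) * (nu : k)))
    {P Q : MvPolynomial (Fin 2) k}
    (h : (C (lam : k) * P ^ 2 + C (nu : k) * Q ^ 2).totalDegree ≤ 2) :
    P.totalDegree ≤ 1 ∧ Q.totalDegree ≤ 1 := by
  by_contra hcon
  rw [not_and_or] at hcon
  have hd2 : 2 ≤ max P.totalDegree Q.totalDegree := by
    rcases hcon with h1 | h1 <;> omega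
  have hcomp : homogeneousComponent (2 * max P.totalDegree Q.totalDegree)
      (C (lam : k) * P ^ 2 + C (nu : k) * Q ^ 2) = 0 :=
    homogeneousComponent_eq_zero _ _ (lt_of_le_of_lt h (by omega))
  rw [map_add, homogeneousComponent_C_mul, homogeneousComponent_C_mul,
    homogeneousComponent_sq (le_max_left _ _), homogeneousComponent_sq (le_max_right _ _)]
    at hcomp
  obtain ⟨hP0, hQ0⟩ := aniso lam nu hsq hcomp
  rcases max_choice P.totalDegree Q.totalDegree with h1 | h1
  · have hPne : P ≠ 0 := by
      intro h0
      have : P.totalDegree = 0 := by rw [h0, totalDegree_zero]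
      omega
    rw [h1] at hP0
    exact leading_ne_zero hPne hP0
  · have hQne : Q ≠ 0 := by
      intro h0
      have : Q.totalDegree = 0 := by rw [h0, totalDegree_zero]
      omega
    rw [h1] at hQ0
    exact leading_ne_zero hQne hQ0

end Aux2
section Aux3
variable {k : Type*} [Field k]

lemma CX_eq_monomial (i : Fin 2) (a : k) :
    C a * X i = monomial (Finsupp.single i 1) a := by
  rw [← pow_one (X i), X_pow_eq_monomial, C_mul_monomial, mul_one]

lemma fin2_sum_eq (m : Fin 2 →₀ ℕ) : ∑ j ∈ m.support, m j = m 0 + m 1 := by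
  rw [Finset.sum_subset (Finset.subset_univ _)
    (fun x _ hx => Finsupp.notMem_support_iff.mp hx)]
  simp [Fin.sum_univ_two]

lemma fin2_rep (m : Fin 2 →₀ ℕ) :
    m = Finsupp.single 0 (m 0) + Finsupp.single 1 (m 1) := by
  ext i
  fin_cases i <;> simp [Finsupp.single_apply]

lemma eq_linear_of_totalDegree_le_one {p : MvPolynomial (Fin 2) k} (h : p.totalDegree ≤ 1) :
    p = C (coeff (Finsupp.single 0 1) p) * X 0 + C (coeff (Finsupp.single 1 1) p) * X 1
      + C (coeff 0 p) := by
  ext m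
  rw [coeff_add, coeff_add, coeff_C, CX_eq_monomial, CX_eq_monomial,
    coeff_monomial, coeff_monomial]
  by_cases hdeg : m 0 + m 1 ≤ 1
  · have hcase : (m 0 = 0 ∧ m 1 = 0) ∨ (m 0 = 1 ∧ m 1 = 0) ∨ (m 0 = 0 ∧ m 1 = 1) := by omega
    rcases hcase with ⟨h0, h1⟩ | ⟨h0, h1⟩ | ⟨h0, h1⟩
    · have hme : m = 0 := by rw [fin2_rep m, h0, h1]; simp
      subst hme
      rw [if_neg, if_neg, if_pos rfl]
      · simp
      · intro hh
        have := congrArg (fun f : Fin 2 →₀ ℕ => f 1) hh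
        simp at this
      · intro hh
        have := congrArg (fun f : Fin 2 →₀ ℕ => f 0) hh
        simp at this
    · have hme : m = Finsupp.single 0 1 := by rw [fin2_rep m, h0, h1]; simp
      subst hme
      rw [if_pos rfl, if_neg, if_neg]
      · simp
      · intro hh
        have := congrArg (fun f : Fin 2 →₀ ℕ => f 0) hh
        simp [Finsupp.single_apply] at this
      · intro hh
        have := congrArg (fun f : Fin 2 →₀ ℕ => f 0) hh
        simp [Finsupp.single_apply] at this
    · have hme : m = Finsupp.single 1 1 := by rw [fin2_rep m, h0, h1]; simp
      subst hme
      rw [if_neg, if_pos rfl, if_neg]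
      · simp
      · intro hh
        have := congrArg (fun f : Fin 2 →₀ ℕ => f 1) hh
        simp [Finsupp.single_apply] at this
      · intro hh
        have := congrArg (fun f : Fin 2 →₀ ℕ => f 1) hh
        simp [Finsupp.single_apply] at this
  · have hc : coeff m p = 0 := by
      apply coeff_eq_zero_of_totalDegree_lt
      rw [fin2_sum_eq]
      omega
    rw [hc, if_neg, if_neg, if_neg]
    · simp
    · intro hh
      have h0 := congrArg (fun f : Fin 2 →₀ ℕ => f 0) hh.symm
      have h1 := congrArg (fun f : Fin 2 →₀ ℕ => f 1) hh.symm
      simp [Finsupp.single_apply] at h0 h1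
      omega
    · intro hh
      have h0 := congrArg (fun f : Fin 2 →₀ ℕ => f 0) hh.symm
      have h1 := congrArg (fun f : Fin 2 →₀ ℕ => f 1) hh.symm
      simp [Finsupp.single_apply] at h0 h1
      omega
    · intro hh
      have h0 := congrArg (fun f : Fin 2 →₀ ℕ => f 0) hh.symm
      have h1 := congrArg (fun f : Fin 2 →₀ ℕ => f 1) hh.symm
      simp [Finsupp.single_apply] at h0 h1
      omega

end Aux3
section Aux4
variable {k : Type*} [Field k]


lemma six {A B C2 D E G : k}
    (h : C A * X 0 ^ 2 + C B * (X 0 * X 1) + C C2 * X 1 ^ 2 + C D * X 0 + C E * X 1 + C G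
      = (0 : MvPolynomial (Fin 2) k)) :
    A = 0 ∧ B = 0 ∧ C2 = 0 ∧ D = 0 ∧ E = 0 ∧ G = 0 := by
  have hXX : (X 0 * X 1 : MvPolynomial (Fin 2) k)
      = monomial (Finsupp.single 0 1 + Finsupp.single 1 1) 1 := by
    rw [← pow_one (X (0 : Fin 2)), ← pow_one (X (1 : Fin 2)), X_pow_eq_monomial,
      X_pow_eq_monomial, monomial_mul, one_mul]
  rw [X_pow_eq_monomial, X_pow_eq_monomial, hXX, CX_eq_monomial, CX_eq_monomial,
    C_mul_monomial, C_mul_monomial, C_mul_monomial, C_apply] at h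
  simp only [mul_one] at h
  have key : ∀ m : Fin 2 →₀ ℕ,
      (if Finsupp.single 0 2 = m then A else 0) + (if Finsupp.single 0 1 + Finsupp.single 1 1 = m then B else 0)
      + (if Finsupp.single 1 2 = m then C2 else 0) + (if Finsupp.single 0 1 = m then D else 0)
      + (if Finsupp.single 1 1 = m then E else 0) + (if 0 = m then G else 0) = 0 := by
    intro m
    have := congrArg (coeff m) h
    simpa [coeff_add, coeff_monomial] using this
  have e1 := key (Finsupp.single 0 2)
  have e2 := key (Finsupp.single 0 1 + Finsupp.single 1 1)
  have e3 := key (Finsupp.single 1 2)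
  have e4 := key (Finsupp.single 0 1)
  have e5 := key (Finsupp.single 1 1)
  have e6 := key 0
  norm_num [Finsupp.ext_iff, Fin.forall_fin_two, Finsupp.single_apply, Finsupp.add_apply]
    at e1 e2 e3 e4 e5 e6
  exact ⟨e1, e2, e3, e4, e5, e6⟩

end Aux4

/-- over a perfect field of characteristic `≠ 2`, the automorphisms of `𝔸²`
preserving the conic `λx² + νy² = 1` (with `-λν` not a square) are exactly the linear
automorphisms preserving the quadratic form `λx² + νy²`. -/
theorem aut_of_anisotropic_conic {k : Type*} [Field k] [PerfectField k]
    (hchar : ringChar k ≠ 2) (lam nu : kˣ)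
    (hsq : ¬ ∃ s : k, s ^ 2 = -((lam : k) * (nu : k)))
    (φ : MvPolynomial (Fin 2) k ≃ₐ[k] MvPolynomial (Fin 2) k) :
    (∃ c : kˣ, φ (C (lam : k) * X 0 ^ 2 + C (nu : k) * X 1 ^ 2 - 1)
        = C (c : k) * (C (lam : k) * X 0 ^ 2 + C (nu : k) * X 1 ^ 2 - 1)) ↔
      ∃ α β γ δ : k, α * δ - β * γ ≠ 0 ∧
        φ (X 0) = C α * X 0 + C β * X 1 ∧
        φ (X 1) = C γ * X 0 + C δ * X 1 ∧
        C (lam : k) * (C α * X 0 + C β * X 1) ^ 2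
            + C (nu : k) * (C γ * X 0 + C δ * X 1) ^ 2
          = C (lam : k) * X 0 ^ 2 + C (nu : k) * X 1 ^ 2 := by
  have hφC : ∀ a : k, φ (C a) = C a := fun a => by
    rw [← MvPolynomial.algebraMap_eq]; exact φ.commutes a
  have h2k : (2 : k) ≠ 0 := by
    intro h2
    have hd : ringChar k ∣ 2 := (CharP.cast_eq_zero_iff k (ringChar k) 2).mp (by exact_mod_cast h2)
    rcases (Nat.dvd_prime Nat.prime_two).mp hd with h | h
    · exact CharP.ringChar_ne_one h
    · exact hchar h
  constructor
  · rintro ⟨c, hc⟩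
    have hF : φ (C (lam : k) * X 0 ^ 2 + C (nu : k) * X 1 ^ 2 - 1)
        = C (lam : k) * (φ (X 0)) ^ 2 + C (nu : k) * (φ (X 1)) ^ 2 - 1 := by
      rw [map_sub, map_add, map_mul, map_mul, map_pow, map_pow, map_one, hφC, hφC]
    rw [hF] at hc
    have hkey : C (lam : k) * (φ (X 0)) ^ 2 + C (nu : k) * (φ (X 1)) ^ 2
        = C (c : k) * (C (lam : k) * X 0 ^ 2 + C (nu : k) * X 1 ^ 2 - 1) + 1 := by
      linear_combination hc
    have hdegR : (C (c : k) * (C (lam : k) * X 0 ^ 2 + C (nu : k) * X 1 ^ 2 - 1)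
        + (1 : MvPolynomial (Fin 2) k)).totalDegree ≤ 2 := by
      refine le_trans (totalDegree_add _ _) (max_le ?_ (by simp))
      refine le_trans (totalDegree_mul _ _) ?_
      rw [totalDegree_C, zero_add, sub_eq_add_neg]
      refine le_trans (totalDegree_add _ _) (max_le ?_ ?_)
      · refine le_trans (totalDegree_add _ _) (max_le ?_ ?_)
        · refine le_trans (totalDegree_mul _ _) ?_
          simp [totalDegree_X_pow]
        · refine le_trans (totalDegree_mul _ _) ?_
          simp [totalDegree_X_pow]
      · rw [show (-1 : MvPolynomial (Fin 2) k) = C (-1) by simp]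
        simp
    obtain ⟨hdP, hdQ⟩ := deg_le_one lam nu hsq (by rw [hkey]; exact hdegR)
    obtain ⟨α, β, e, hP⟩ : ∃ α β e, φ (X 0) = C α * X 0 + C β * X 1 + C e :=
      ⟨_, _, _, eq_linear_of_totalDegree_le_one hdP⟩
    obtain ⟨γ, δ, f, hQ⟩ : ∃ γ δ f, φ (X 1) = C γ * X 0 + C δ * X 1 + C f :=
      ⟨_, _, _, eq_linear_of_totalDegree_le_one hdQ⟩
    rw [hP, hQ] at hc
    have hexp : C ((lam : k) * α ^ 2 + (nu : k) * γ ^ 2 - (c : k) * (lam : k)) * X 0 ^ 2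
        + C (2 * ((lam : k) * α * β + (nu : k) * γ * δ)) * (X 0 * X 1)
        + C ((lam : k) * β ^ 2 + (nu : k) * δ ^ 2 - (c : k) * (nu : k)) * X 1 ^ 2
        + C (2 * ((lam : k) * α * e + (nu : k) * γ * f)) * X 0
        + C (2 * ((lam : k) * β * e + (nu : k) * δ * f)) * X 1
        + C ((lam : k) * e ^ 2 + (nu : k) * f ^ 2 - 1 + (c : k))
        = (0 : MvPolynomial (Fin 2) k) := by
      simp only [map_add, map_sub, map_mul, map_pow, map_one, map_ofNat]
      linear_combination hc
    obtain ⟨h1, h2, h3, h4, h5, h6⟩ := six hexp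
    have h2' : (lam : k) * α * β + (nu : k) * γ * δ = 0 := by
      rcases mul_eq_zero.mp h2 with h0 | h0
      · exact absurd h0 h2k
      · exact h0
    have h4' : (lam : k) * α * e + (nu : k) * γ * f = 0 := by
      rcases mul_eq_zero.mp h4 with h0 | h0
      · exact absurd h0 h2k
      · exact h0
    have h5' : (lam : k) * β * e + (nu : k) * δ * f = 0 := by
      rcases mul_eq_zero.mp h5 with h0 | h0
      · exact absurd h0 h2k
      · exact h0
    have hdet2 : (α * δ - β * γ) ^ 2 = (c : k) ^ 2 := by
      have hLN0 : (lam : k) * (nu : k) ≠ 0 := mul_ne_zero lam.ne_zero nu.ne_zero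
      apply mul_left_cancel₀ hLN0
      linear_combination ((lam : k) * β ^ 2 + (nu : k) * δ ^ 2) * h1
        + ((c : k) * (lam : k)) * h3 - ((lam : k) * α * β + (nu : k) * γ * δ) * h2'
    have hdet0 : α * δ - β * γ ≠ 0 := by
      intro h0
      rw [h0] at hdet2
      have : (c : k) = 0 := by
        have := hdet2.symm
        rw [show (0 : k) ^ 2 = 0 by ring] at this
        exact pow_eq_zero_iff two_ne_zero |>.mp this
      exact c.ne_zero this
    have he : e = 0 := by
      have hLe : ((lam : k) * (α * δ - β * γ)) * e = 0 := by
        linear_combination δ * h4' - γ * h5'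
      rcases mul_eq_zero.mp hLe with h0 | h0
      · exact absurd h0 (mul_ne_zero lam.ne_zero hdet0)
      · exact h0
    have hf : f = 0 := by
      have hNf : ((nu : k) * (α * δ - β * γ)) * f = 0 := by
        linear_combination α * h5' - β * h4'
      rcases mul_eq_zero.mp hNf with h0 | h0
      · exact absurd h0 (mul_ne_zero nu.ne_zero hdet0)
      · exact h0
    subst he hf
    have hc1 : (c : k) = 1 := by linear_combination h6
    have h1c : (lam : k) * α ^ 2 + (nu : k) * γ ^ 2 = (lam : k) := by
      linear_combination h1 + (lam : k) * hc1
    have h3c : (lam : k) * β ^ 2 + (nu : k) * δ ^ 2 = (nu : k) := by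
      linear_combination h3 + (nu : k) * hc1
    refine ⟨α, β, γ, δ, hdet0, by rw [hP]; simp, by rw [hQ]; simp, ?_⟩
    have H1 : (C (lam : k) * C α ^ 2 + C (nu : k) * C γ ^ 2 : MvPolynomial ℕ k)
        = C (lam : k) := by
      rw [← map_pow, ← map_pow, ← map_mul, ← map_mul, ← map_add, h1c]
    have H3 : (C (lam : k) * C β ^ 2 + C (nu : k) * C δ ^ 2 : MvPolynomial ℕ k)
        = C (nu : k) := by
      rw [← map_pow, ← map_pow, ← map_mul, ← map_mul, ← map_add, h3c]
    have H2 : (C (lam : k) * (C α * C β) + C (nu : k) * (C γ * C δ) : MvPolynomial ℕ k)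
        = 0 := by
      rw [← map_mul, ← map_mul, ← map_mul, ← map_mul, ← map_add,
        show (lam : k) * (α * β) + (nu : k) * (γ * δ) = 0 from by linear_combination h2', C_0]
    have expand : (C (lam : k) * (C α * X 0 + C β * X 1) ^ 2
        + C (nu : k) * (C γ * X 0 + C δ * X 1) ^ 2 : MvPolynomial ℕ k)
        = (C (lam : k) * C α ^ 2 + C (nu : k) * C γ ^ 2) * X 0 ^ 2
          + (C (lam : k) * (C α * C β) + C (nu : k) * (C γ * C δ)) * (2 * (X 0 * X 1))
          + (C (lam : k) * C β ^ 2 + C (nu : k) * C δ ^ 2) * X 1 ^ 2 := by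
      ring
    rw [expand, H1, H2, H3, zero_mul, add_zero]
  · rintro ⟨α, β, γ, δ, hdet, hP, hQ, hform⟩
    have hform2 : C (lam : k) * (C α * X 0 + C β * X 1) ^ 2
        + C (nu : k) * (C γ * X 0 + C δ * X 1) ^ 2
        = (C (lam : k) * X 0 ^ 2 + C (nu : k) * X 1 ^ 2 : MvPolynomial (Fin 2) k) := by
      have := congrArg (aeval (fun n : ℕ => (X (open Fin.NatCast in (n : Fin 2)) : MvPolynomial (Fin 2) k))) hform
      simpa [map_add, map_mul, map_pow, aeval_X, aeval_C, algebraMap_eq] using this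
    refine ⟨1, ?_⟩
    rw [map_sub, map_add, map_mul, map_mul, map_pow, map_pow, map_one, hφC, hφC, hP, hQ]
    rw [show ((1 : kˣ) : k) = 1 from rfl, map_one, one_mul]
    exact sub_left_inj.mpr hform2
end

section
/- Let k be a perfect field of characteristic 2, and let μ ∈ k* be such that the polynomial x² + μx + 1 has no root in k. Set F = x² + μxy + y² − 1 ∈ k[x,y]. Then a k-algebra automorphism φ of k[x,y] satisfies φ(F) = cF for some c ∈ k* if and only if φ is linear (φ(x) = αx + βy, φ(y) = γx + δy with αδ − βγ ≠ 0) and preserves the quadratic form, i.e. φ(x)² + μ·φ(x)·φ(y) + φ(y)² = x² + μxy + y²; equivalently, Aut(A², V(F)) is the subgroup of GL(2,k) preserving the form x² + μxy + y², namely the set of matrices (a, b; b, a + μb) with a² + μab + b² = 1 together with their compositions with σ = (1, μ; 0, 1). -/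
open MvPolynomial

section AuxAutConic

universe u

variable {σ R : Type*} [CommRing R] [IsDomain R]

omit [IsDomain R] in
theorem AutConic.hc_top_ne_zero (p : MvPolynomial σ R) (hp : p ≠ 0) :
    homogeneousComponent p.totalDegree p ≠ 0 := by
  obtain ⟨d, hd, hdeg⟩ := Finset.exists_mem_eq_sup p.support
    (support_nonempty.mpr hp) (fun d => d.sum fun _ e => e)
  intro h0
  have := congrArg (coeff d) h0
  rw [coeff_homogeneousComponent] at this
  have hdd : d.degree = p.totalDegree := by
    rw [totalDegree, hdeg]; rfl
  simp [hdd, mem_support_iff.mp hd] at this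

omit [IsDomain R] in
theorem AutConic.sub_hc_top (p : MvPolynomial σ R) :
    p - homogeneousComponent p.totalDegree p = 0 ∨
      (p - homogeneousComponent p.totalDegree p).totalDegree < p.totalDegree := by
  have hcoeff : ∀ d : σ →₀ ℕ, coeff d (p - homogeneousComponent p.totalDegree p)
      = if d.degree = p.totalDegree then 0 else coeff d p := by
    intro d
    rw [coeff_sub, coeff_homogeneousComponent]
    split_ifs <;> simp
  by_cases h0 : p - homogeneousComponent p.totalDegree p = 0
  · exact Or.inl h0
  right
  rcases Nat.eq_zero_or_pos p.totalDegree with h | h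
  · exfalso; apply h0
    ext d
    rw [hcoeff, coeff_zero]
    split_ifs with hdd
    · rfl
    · rw [coeff_eq_zero_of_totalDegree_lt]
      have h1 : d.degree ≠ 0 := fun hz => hdd (by rw [hz, h])
      have h2 : d.degree = ∑ i ∈ d.support, d i := rfl
      omega
  rw [totalDegree]
  apply Finset.sup_lt_iff (by simpa using h) |>.mpr
  intro d hd
  rw [mem_support_iff, hcoeff] at hd
  have hne : d.degree ≠ p.totalDegree := by intro hdd; simp [hdd] at hd
  have hle : (d.sum fun _ e => e) ≤ p.totalDegree := by
    apply le_totalDegree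
    rw [mem_support_iff]
    intro hc; simp [hc] at hd
  have h2 : (d.sum fun _ e => e) = d.degree := rfl
  omega

omit [IsDomain R] in
theorem AutConic.hc_top_mul (p q : MvPolynomial σ R) :
    homogeneousComponent (p.totalDegree + q.totalDegree) (p * q)
      = homogeneousComponent p.totalDegree p * homogeneousComponent q.totalDegree q := by
  have hp' := AutConic.sub_hc_top p
  have hq' := AutConic.sub_hc_top q
  set P := homogeneousComponent p.totalDegree p with hPd
  set Q := homogeneousComponent q.totalDegree q with hQd
  have hP : P.IsHomogeneous p.totalDegree := homogeneousComponent_isHomogeneous _ _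
  have hQ : Q.IsHomogeneous q.totalDegree := homogeneousComponent_isHomogeneous _ _
  have hsplit : p * q = (p - P) * (q - Q) + (p - P) * Q + P * (q - Q) + P * Q := by ring
  rw [hsplit, map_add, map_add, map_add]
  have hz : ∀ a b : MvPolynomial σ R, a.totalDegree + b.totalDegree < p.totalDegree + q.totalDegree
      → homogeneousComponent (p.totalDegree + q.totalDegree) (a * b) = 0 := by
    intro a b hab
    apply homogeneousComponent_eq_zero
    exact lt_of_le_of_lt (totalDegree_mul a b) hab
  have hPle : P.totalDegree ≤ p.totalDegree := hP.totalDegree_le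
  have hQle : Q.totalDegree ≤ q.totalDegree := hQ.totalDegree_le
  have e1 : homogeneousComponent (p.totalDegree + q.totalDegree) ((p - P) * (q - Q)) = 0 := by
    rcases hp' with h | h
    · rw [h, zero_mul, map_zero]
    rcases hq' with h' | h'
    · rw [h', mul_zero, map_zero]
    exact hz _ _ (by omega)
  have e2 : homogeneousComponent (p.totalDegree + q.totalDegree) ((p - P) * Q) = 0 := by
    rcases hp' with h | h
    · rw [h, zero_mul, map_zero]
    rcases Nat.eq_zero_or_pos Q.totalDegree with h' | h'
    · exact hz _ _ (by omega)
    · exact hz _ _ (by omega)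
  have e3 : homogeneousComponent (p.totalDegree + q.totalDegree) (P * (q - Q)) = 0 := by
    rcases hq' with h | h
    · rw [h, mul_zero, map_zero]
    exact hz _ _ (by omega)
  rw [e1, e2, e3, zero_add, zero_add, zero_add]
  rw [homogeneousComponent_of_mem (hP.mul hQ)]
  simp

theorem AutConic.totalDegree_mul_eq {p q : MvPolynomial σ R} (hp : p ≠ 0) (hq : q ≠ 0) :
    (p * q).totalDegree = p.totalDegree + q.totalDegree := by
  apply le_antisymm (totalDegree_mul p q)
  by_contra hlt
  push_neg at hlt
  have h0 : homogeneousComponent (p.totalDegree + q.totalDegree) (p * q) = 0 := by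
    apply homogeneousComponent_eq_zero; exact hlt
  rw [AutConic.hc_top_mul] at h0
  exact mul_ne_zero (AutConic.hc_top_ne_zero p hp) (AutConic.hc_top_ne_zero q hq) h0

theorem AutConic.coeffs_six {k : Type*} [CommRing k] (a0 a1 a2 a3 a4 a5 : k)
    (h : C a0 + C a1 * X 0 + C a2 * X 1 + C a3 * X 0 ^ 2 + C a4 * (X 0 * X 1) + C a5 * X 1 ^ 2
      = (0 : MvPolynomial (Fin 2) k)) :
    a0 = 0 ∧ a1 = 0 ∧ a2 = 0 ∧ a3 = 0 ∧ a4 = 0 ∧ a5 = 0 := by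
  rw [show (X 0 * X 1 : MvPolynomial (Fin 2) k)
      = monomial (Finsupp.single 0 1 + Finsupp.single 1 1) 1 by
    rw [X, X, monomial_mul, one_mul]] at h
  have h0 := congrArg (coeff (0 : Fin 2 →₀ ℕ)) h
  have h1 := congrArg (coeff (Finsupp.single (0 : Fin 2) 1)) h
  have h2 := congrArg (coeff (Finsupp.single (1 : Fin 2) 1)) h
  have h3 := congrArg (coeff (Finsupp.single (0 : Fin 2) 2)) h
  have h4 := congrArg (coeff (Finsupp.single (0 : Fin 2) 1 + Finsupp.single 1 1)) h
  have h5 := congrArg (coeff (Finsupp.single (1 : Fin 2) 2)) h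
  simp [coeff_C, coeff_X', X_pow_eq_monomial, coeff_monomial, Finsupp.ext_iff, Fin.forall_fin_two,
    Finsupp.single_apply] at h0 h1 h2 h3 h4 h5
  exact ⟨h0, h1, h2, h3, h4, h5⟩

theorem AutConic.linear_struct {k : Type*} [CommRing k] (p : MvPolynomial (Fin 2) k)
    (h : p.totalDegree ≤ 1) :
    p = C (coeff 0 p) + C (coeff (Finsupp.single 0 1) p) * X 0
      + C (coeff (Finsupp.single 1 1) p) * X 1 := by
  ext d
  have hd : d = Finsupp.single 0 (d 0) + Finsupp.single 1 (d 1) := by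
    ext i; fin_cases i <;> simp [Finsupp.single_apply]
  by_cases hbig : 2 ≤ d 0 + d 1
  · have hdeg : p.totalDegree < ∑ i ∈ d.support, d i := by
      have : ∑ i ∈ d.support, d i = d 0 + d 1 := by
        rw [Finset.sum_subset (Finset.subset_univ d.support)]
        · simp [Fin.sum_univ_two]
        · intro x _ hx; simpa using (Finsupp.notMem_support_iff.mp hx)
      omega
    rw [coeff_eq_zero_of_totalDegree_lt hdeg]
    have hne0 : d ≠ 0 := by
      intro h0; rw [h0] at hbig; simp at hbig
    have hne1 : d ≠ Finsupp.single 0 1 := by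
      intro h0; rw [h0] at hbig; simp [Finsupp.single_apply] at hbig
    have hne2 : d ≠ Finsupp.single 1 1 := by
      intro h0; rw [h0] at hbig; simp [Finsupp.single_apply] at hbig
    simp [coeff_C, coeff_X', Ne.symm hne0, Ne.symm hne1, Ne.symm hne2]
  · have c0 : d 0 = 0 ∨ (d 0 = 1 ∧ d 1 = 0) := by omega
    have c1 : d 1 = 0 ∨ d 1 = 1 := by omega
    rcases c0 with h00 | ⟨h01, h10⟩
    · rcases c1 with h10 | h11
      · have : d = 0 := by rw [hd, h00, h10]; simp
        subst this; simp [coeff_C, coeff_X']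
      · have : d = Finsupp.single 1 1 := by rw [hd, h00, h11]; simp
        subst this
        simp [coeff_C, coeff_X', Finsupp.ext_iff, Fin.forall_fin_two, Finsupp.single_apply]
    · have : d = Finsupp.single 0 1 := by rw [hd, h01, h10]; simp
      subst this
      simp [coeff_C, coeff_X', Finsupp.ext_iff, Fin.forall_fin_two, Finsupp.single_apply]

theorem AutConic.tD_map {k K : Type*} [CommSemiring k] [CommSemiring K] (f : k →+* K)
    (hf : Function.Injective f) (p : MvPolynomial (Fin 2) k) :
    (MvPolynomial.map f p).totalDegree = p.totalDegree := by
  rw [totalDegree, totalDegree, support_map_of_injective p hf]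

theorem AutConic.quad_ext {k : Type u} [Field k] (mu : kˣ)
    (hroot : ∀ s : k, s ^ 2 + (mu : k) * s + 1 ≠ 0) :
    ∃ (K : Type u) (_ : Field K) (_ : Algebra k K), ∃ θ : K,
      θ ^ 2 + algebraMap k K mu * θ + 1 = 0 ∧ θ ∉ Set.range (algebraMap k K) := by
  classical
  set f : Polynomial k := Polynomial.X ^ 2 + Polynomial.C (mu : k) * Polynomial.X + 1 with hf
  have hfC : f = Polynomial.C 1 * Polynomial.X ^ 2 + Polynomial.C (mu : k) * Polynomial.X
      + Polynomial.C 1 := by simp [hf]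
  have hdeg : f.natDegree = 2 := by
    rw [hfC]; exact Polynomial.natDegree_quadratic one_ne_zero
  have hf0 : f ≠ 0 := fun h => by simp [h] at hdeg
  have hirr : Irreducible f := by
    rw [Polynomial.irreducible_iff_roots_eq_zero_of_degree_le_three (by omega) (by omega)]
    rw [Multiset.eq_zero_iff_forall_notMem]
    intro a ha
    rw [Polynomial.mem_roots hf0] at ha
    simp only [hf, Polynomial.IsRoot, Polynomial.eval_add, Polynomial.eval_pow,
      Polynomial.eval_X, Polynomial.eval_mul, Polynomial.eval_C, Polynomial.eval_one] at ha
    exact hroot a ha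
  haveI : Fact (Irreducible f) := ⟨hirr⟩
  have hrootK : (AdjoinRoot.root f) ^ 2
      + algebraMap k (AdjoinRoot f) (mu : k) * AdjoinRoot.root f + 1 = 0 := by
    have := AdjoinRoot.eval₂_root f
    rw [hf] at this
    simpa [AdjoinRoot.algebraMap_eq] using this
  refine ⟨AdjoinRoot f, inferInstance, inferInstance, AdjoinRoot.root f, hrootK, ?_⟩
  rintro ⟨a, ha⟩
  rw [← ha] at hrootK
  have h2 : algebraMap k (AdjoinRoot f) (a ^ 2 + (mu : k) * a + 1) = 0 := by
    rw [map_add, map_add, map_pow, map_mul, map_one]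
    exact hrootK
  exact hroot a ((algebraMap k (AdjoinRoot f)).injective (by rw [h2, map_zero]))

theorem AutConic.deg_le_one_of_factor {k K : Type*} [Field k] [Field K] [Algebra k K]
    (h2K : (2 : K) = 0) (mu : kˣ) (θ : K)
    (hθ : θ ^ 2 + algebraMap k K mu * θ + 1 = 0) (hnr : θ ∉ Set.range (algebraMap k K))
    (p q G : MvPolynomial (Fin 2) k) (hG : G.totalDegree ≤ 2)
    (hEq : p ^ 2 + C (mu : k) * p * q + q ^ 2 = G) :
    p.totalDegree ≤ 1 ∧ q.totalDegree ≤ 1 := by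
  classical
  have hinj : Function.Injective (algebraMap k K) := (algebraMap k K).injective
  set μ' : K := algebraMap k K mu with hμ'
  set A : MvPolynomial (Fin 2) k →+* MvPolynomial (Fin 2) K :=
    (MvPolynomial.map (algebraMap k K)) with hA
  set P := A p with hP
  set Q := A q with hQ
  set u := P - C θ * Q with hu
  set v := P - C (-μ' - θ) * Q with hv
  have hAEq : P ^ 2 + C μ' * P * Q + Q ^ 2 = A G := by
    rw [hP, hQ, ← hEq]
    simp only [hA, map_add, map_mul, map_pow, MvPolynomial.map_C]
    rfl
  have hc2 : (C θ : MvPolynomial (Fin 2) K) * C (-μ' - θ) = 1 := by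
    rw [← C_mul, show θ * (-μ' - θ) = 1 by linear_combination -hθ, C_1]
  have hc3 : (C θ : MvPolynomial (Fin 2) K) + C (-μ' - θ) = - C μ' := by
    rw [← C_add, show θ + (-μ' - θ) = -μ' by ring, map_neg]
  have huv : u * v = A G := by
    rw [hu, hv, ← hAEq]
    linear_combination (Q ^ 2) * hc2 - (P * Q) * hc3
  have hAG : (A G).totalDegree ≤ 2 := by rw [hA, AutConic.tD_map _ hinj]; exact hG
  have hdegp : p.totalDegree = P.totalDegree := by rw [hP, hA, AutConic.tD_map _ hinj]
  have hdegq : q.totalDegree = Q.totalDegree := by rw [hQ, hA, AutConic.tD_map _ hinj]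
  have hsup : ∀ r : MvPolynomial (Fin 2) k,
      (∀ m : Fin 2 →₀ ℕ, m ≠ 0 → coeff m r = 0) → r.totalDegree ≤ 1 := by
    intro r hr
    rw [totalDegree]
    apply Finset.sup_le
    intro m hm
    rcases eq_or_ne m 0 with rfl | hne
    · simp
    · exact absurd (mem_support_iff.mp hm) (by simp [hr m hne])
  have hconst : ∀ θ₀ : K, θ₀ ∉ Set.range (algebraMap k K) →
      (P - C θ₀ * Q).totalDegree = 0 → p.totalDegree ≤ 1 ∧ q.totalDegree ≤ 1 := by
    intro θ₀ hnr0 hdeg0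
    have hzero : ∀ m : Fin 2 →₀ ℕ, m ≠ 0 → coeff m p = 0 ∧ coeff m q = 0 := by
      intro m hm
      have hdm : 0 < ∑ i ∈ m.support, m i := by
        have h1 : Finsupp.degree m ≠ 0 := fun h => hm ((Finsupp.degree_eq_zero_iff m).mp h)
        have h2 : Finsupp.degree m = ∑ i ∈ m.support, m i := rfl
        omega
      have h0 : coeff m (P - C θ₀ * Q) = 0 :=
        coeff_eq_zero_of_totalDegree_lt (by omega)
      rw [coeff_sub, coeff_C_mul, hP, hQ] at h0
      simp only [hA, coeff_map] at h0
      by_cases hq0 : coeff m q = 0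
      · refine ⟨?_, hq0⟩
        rw [hq0, map_zero, mul_zero, sub_zero] at h0
        exact hinj (by rw [h0, map_zero])
      · exfalso
        apply hnr0
        refine ⟨coeff m p * (coeff m q)⁻¹, ?_⟩
        rw [map_mul, map_inv₀]
        have hq0' : algebraMap k K (coeff m q) ≠ 0 := fun h => hq0 (hinj (by rw [h, map_zero]))
        field_simp
        linear_combination h0
    exact ⟨hsup p (fun m hm => (hzero m hm).1), hsup q (fun m hm => (hzero m hm).2)⟩
  by_cases hu0 : u.totalDegree = 0
  · exact hconst θ hnr hu0
  by_cases hv0 : v.totalDegree = 0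
  · refine hconst (-μ' - θ) ?_ hv0
    rintro ⟨a, ha⟩
    exact hnr ⟨-(mu : k) - a, by rw [map_sub, map_neg, ha, ← hμ']; ring⟩
  have hune : u ≠ 0 := fun h => hu0 (by rw [h, totalDegree_zero])
  have hvne : v ≠ 0 := fun h => hv0 (by rw [h, totalDegree_zero])
  have hsum : u.totalDegree + v.totalDegree ≤ 2 := by
    rw [← AutConic.totalDegree_mul_eq hune hvne, huv]; exact hAG
  have hu1 : u.totalDegree = 1 := by omega
  have hv1 : v.totalDegree = 1 := by omega
  have hθθ : θ + θ = 0 := by rw [← two_mul, h2K, zero_mul]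
  have hc5 : (C (-μ' - θ) : MvPolynomial (Fin 2) K) - C θ = C (-μ') := by
    rw [← C_sub, show -μ' - θ - θ = -μ' by linear_combination -hθθ]
  have humv : u - v = C (-μ') * Q := by
    rw [hu, hv]
    linear_combination Q * hc5
  have hμ0 : -μ' ≠ 0 := by
    rw [hμ']
    simp only [ne_eq, neg_eq_zero]
    exact fun h => mu.ne_zero (hinj (by rw [h, map_zero]))
  have hQeq : Q = C ((-μ')⁻¹) * (u - v) := by
    rw [humv, ← mul_assoc, ← C_mul, inv_mul_cancel₀ hμ0, C_1, one_mul]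
  have hQdeg : Q.totalDegree ≤ 1 := by
    calc Q.totalDegree ≤ (C ((-μ')⁻¹) : MvPolynomial (Fin 2) K).totalDegree
          + (u - v).totalDegree := by rw [hQeq]; exact totalDegree_mul _ _
      _ ≤ 0 + max u.totalDegree v.totalDegree :=
          add_le_add (le_of_eq (totalDegree_C _)) (totalDegree_sub _ _)
      _ ≤ 1 := by omega
  have hPeq : P = u + C θ * Q := by rw [hu]; ring
  have hPdeg : P.totalDegree ≤ 1 := by
    calc P.totalDegree ≤ max u.totalDegree (C θ * Q).totalDegree := by
          rw [hPeq]; exact totalDegree_add _ _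
      _ ≤ max 1 ((C θ : MvPolynomial (Fin 2) K).totalDegree + Q.totalDegree) :=
          max_le_max (le_of_eq hu1) (totalDegree_mul _ _)
      _ ≤ 1 := by rw [totalDegree_C]; omega
  exact ⟨by rw [hdegp]; exact hPdeg, by rw [hdegq]; exact hQdeg⟩

end AuxAutConic

/-- over a perfect field of characteristic 2, the automorphisms of `𝔸²`
preserving the conic `x² + μxy + y² = 1` (with `x² + μx + 1` having no root in `k`) are
exactly the linear automorphisms preserving the quadratic form `x² + μxy + y²`. -/
theorem aut_of_anisotropic_conic_char_two {k : Type*} [Field k] [PerfectField k]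
    [CharP k 2] (mu : kˣ) (hroot : ∀ s : k, s ^ 2 + (mu : k) * s + 1 ≠ 0)
    (φ : MvPolynomial (Fin 2) k ≃ₐ[k] MvPolynomial (Fin 2) k) :
    (∃ c : kˣ, φ (X 0 ^ 2 + C (mu : k) * X 0 * X 1 + X 1 ^ 2 - 1)
        = C (c : k) * (X 0 ^ 2 + C (mu : k) * X 0 * X 1 + X 1 ^ 2 - 1)) ↔
      ∃ α β γ δ : k, α * δ - β * γ ≠ 0 ∧
        φ (X 0) = C α * X 0 + C β * X 1 ∧
        φ (X 1) = C γ * X 0 + C δ * X 1 ∧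
        (C α * X 0 + C β * X 1) ^ 2
            + C (mu : k) * (C α * X 0 + C β * X 1) * (C γ * X 0 + C δ * X 1)
            + (C γ * X 0 + C δ * X 1) ^ 2
          = X 0 ^ 2 + C (mu : k) * X 0 * X 1 + X 1 ^ 2 := by
  have hC : ∀ a : k, φ (C a) = C a := fun a => by
    rw [← MvPolynomial.algebraMap_eq]; exact φ.commutes a
  have h2k : (2 : k) = 0 := by exact_mod_cast CharP.cast_eq_zero k 2
  constructor
  · rintro ⟨c, h⟩
    set p := φ (X 0) with hp
    set q := φ (X 1) with hq
    simp only [map_sub, map_add, map_mul, map_pow, map_one, hC] at h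
    have hId : p ^ 2 + C (mu : k) * p * q + q ^ 2
        = C (c : k) * (X 0 ^ 2 + C (mu : k) * X 0 * X 1 + X 1 ^ 2 - 1) + 1 := by
      linear_combination h
    -- degree bound on the RHS
    have hF2 : (X 0 ^ 2 + C (mu : k) * X 0 * X 1 + X 1 ^ 2 - 1 :
        MvPolynomial (Fin 2) k).totalDegree ≤ 2 := by
      refine le_trans (totalDegree_sub _ _) (max_le ?_ (by rw [totalDegree_one]; omega))
      refine le_trans (totalDegree_add _ _) (max_le (le_trans (totalDegree_add _ _)
        (max_le ?_ ?_)) ?_)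
      · rw [totalDegree_X_pow]
      · refine le_trans (totalDegree_mul _ _)
          (le_trans (add_le_add (totalDegree_mul _ _) le_rfl) ?_)
        rw [totalDegree_C, totalDegree_X, totalDegree_X]
      · rw [totalDegree_X_pow]
    have hG : (C (c : k) * (X 0 ^ 2 + C (mu : k) * X 0 * X 1 + X 1 ^ 2 - 1) + 1 :
        MvPolynomial (Fin 2) k).totalDegree ≤ 2 := by
      refine le_trans (totalDegree_add _ _) (max_le ?_ (by rw [totalDegree_one]; omega))
      refine le_trans (totalDegree_mul _ _) ?_
      rw [totalDegree_C]
      omega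
    -- quadratic extension
    obtain ⟨K, hKf, hKa, θ, hθ, hnr⟩ := AutConic.quad_ext mu hroot
    have h2K : (2 : K) = 0 := by
      rw [← map_ofNat (algebraMap k K) 2, h2k, map_zero]
    obtain ⟨hdp, hdq⟩ := AutConic.deg_le_one_of_factor h2K mu θ hθ hnr p q _ hG hId
    -- structure of p and q
    set e := coeff 0 p with he'
    set α := coeff (Finsupp.single 0 1) p with hα'
    set β := coeff (Finsupp.single 1 1) p with hβ'
    set f := coeff 0 q with hf'
    set γ := coeff (Finsupp.single 0 1) q with hγ'
    set δ := coeff (Finsupp.single 1 1) q with hδ'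
    have hps : p = C e + C α * X 0 + C β * X 1 := AutConic.linear_struct p hdp
    have hqs : q = C f + C γ * X 0 + C δ * X 1 := AutConic.linear_struct q hdq
    rw [hps, hqs] at hId
    have hz : C (e ^ 2 + (mu : k) * e * f + f ^ 2 - 1 + (c : k))
        + C (2 * e * α + (mu : k) * (e * γ + f * α) + 2 * f * γ) * X 0
        + C (2 * e * β + (mu : k) * (e * δ + f * β) + 2 * f * δ) * X 1
        + C (α ^ 2 + (mu : k) * α * γ + γ ^ 2 - (c : k)) * X 0 ^ 2
        + C (2 * α * β + (mu : k) * (α * δ + β * γ) + 2 * γ * δ - (c : k) * (mu : k))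
            * (X 0 * X 1)
        + C (β ^ 2 + (mu : k) * β * δ + δ ^ 2 - (c : k)) * X 1 ^ 2
        = (0 : MvPolynomial (Fin 2) k) := by
      simp only [map_add, map_mul, map_sub, map_pow, map_one, map_ofNat]
      linear_combination hId
    obtain ⟨E0, E1, E2, E3, E4, E5⟩ := AutConic.coeffs_six _ _ _ _ _ _ hz
    have hμne : (mu : k) ≠ 0 := mu.ne_zero
    have hcne : (c : k) ≠ 0 := c.ne_zero
    have hEγ : e * γ + f * α = 0 := by
      have h' : (mu : k) * (e * γ + f * α) = 0 := by
        linear_combination E1 - (e * α + f * γ) * h2k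
      exact (mul_eq_zero.mp h').resolve_left hμne
    have hEδ : e * δ + f * β = 0 := by
      have h' : (mu : k) * (e * δ + f * β) = 0 := by
        linear_combination E2 - (e * β + f * δ) * h2k
      exact (mul_eq_zero.mp h').resolve_left hμne
    have hDet : α * δ + β * γ = (c : k) := by
      have h' : (mu : k) * (α * δ + β * γ - (c : k)) = 0 := by
        linear_combination E4 - (α * β + γ * δ) * h2k
      have := (mul_eq_zero.mp h').resolve_left hμne
      linear_combination this
    have he : e = 0 := by
      have h' : e * (c : k) = 0 := by
        linear_combination -(e * hDet) + α * hEδ + β * hEγ - α * β * f * h2k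
      exact (mul_eq_zero.mp h').resolve_right hcne
    have hf : f = 0 := by
      have h' : f * (c : k) = 0 := by
        linear_combination -(f * hDet) + δ * hEγ + γ * hEδ - e * γ * δ * h2k
      exact (mul_eq_zero.mp h').resolve_right hcne
    have hc1 : (c : k) = 1 := by
      linear_combination E0 - e * he - (mu : k) * f * he - f * hf
    refine ⟨α, β, γ, δ, ?_, ?_, ?_, ?_⟩
    · have : α * δ - β * γ = 1 := by
        rw [hc1] at hDet
        linear_combination hDet - β * γ * h2k
      rw [this]; exact one_ne_zero
    · rw [hps, he, C_0, zero_add]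
    · rw [hqs, hf, C_0, zero_add]
    · rw [he, hf, hc1, C_0, C_1, one_mul] at hId
      have hren := congrArg (rename (Fin.val : Fin 2 → ℕ)) hId
      simp only [map_add, map_mul, map_pow, map_sub, map_one, map_zero, rename_C, rename_X,
        Fin.isValue, Fin.val_zero, Fin.val_one] at hren
      linear_combination hren
  · rintro ⟨α, β, γ, δ, hdet, h0, h1, hform⟩
    refine ⟨1, ?_⟩
    simp only [Units.val_one, C_1, one_mul]
    have hren := congrArg (rename (fun n : ℕ => if n = 0 then (0 : Fin 2) else 1)) hform
    simp only [map_add, map_mul, map_pow, rename_C, rename_X] at hren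
    norm_num at hren
    simp only [map_sub, map_add, map_mul, map_pow, map_one, hC, h0, h1]
    linear_combination hren
end
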